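/- Let Θ ⊂ ℝ^d and suppose the maps α ↦ m_α(x) satisfy the Lipschitz condition |m_{α₁}(x) - m_{α₂}(x)| ≤ φ(x)·‖α₁ - α₂‖ for all α₁, α₂ ∈ Θ and all x, where φ is integrable with respect to a probability measure P. If X_1, X_2, ... are i.i.d. with law P, E|m_α(X_1)| < ∞ for each α, and Θ is compact, then sup_{α∈Θ} |(1/N)Σ_{i=1}^N m_α(X_i) - E[m_α(X_1)]| → 0 almost surely as N → ∞. -/

import Mathlib

open MeasureTheory ProbabilityTheory Filter

section Aux

variable {𝒳 : Type*} [MeasurableSpace 𝒳] {P : Measure 𝒳} [IsProbabilityMeasure P]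
  {Ω : Type*} [MeasurableSpace Ω] {Q : Measure Ω} [IsProbabilityMeasure Q]

/-- SLLN transported through an i.i.d. sequence with law `P`. -/
lemma slln_comp (X : ℕ → Ω → 𝒳) (hXmeas : ∀ i, Measurable (X i))
    (hXindep : iIndepFun X Q)
    (hXlaw : ∀ i, Measure.map (X i) Q = P)
    (f : 𝒳 → ℝ) (hf : Measurable f) (hfint : Integrable f P) :
    ∀ᵐ ω ∂Q, Tendsto (fun N : ℕ => (N : ℝ)⁻¹ * ∑ i ∈ Finset.range N, f (X i ω))
      atTop (nhds (∫ x, f x ∂P)) := by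
  have hident : ∀ i, IdentDistrib (fun ω => f (X i ω)) (fun ω => f (X 0 ω)) Q Q := by
    intro i
    have h0 : IdentDistrib (X i) (X 0) Q Q :=
      ⟨(hXmeas i).aemeasurable, (hXmeas 0).aemeasurable, by rw [hXlaw i, hXlaw 0]⟩
    exact h0.comp hf
  have hindep : Pairwise (Function.onFun (IndepFun · · Q) fun i ω => f (X i ω)) := by
    intro i j hij
    exact (hXindep.indepFun hij).comp hf hf
  have hint : Integrable (fun ω => f (X 0 ω)) Q := by
    rw [← hXlaw 0] at hfint
    exact (integrable_map_measure hfint.aestronglyMeasurable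
      (hXmeas 0).aemeasurable).mp hfint
  have hE : ∫ ω, f (X 0 ω) ∂Q = ∫ x, f x ∂P := by
    rw [← hXlaw 0, integral_map (hXmeas 0).aemeasurable
      (hf.aestronglyMeasurable)]
  have h := strong_law_ae_real (fun i ω => f (X i ω)) hint hindep hident
  filter_upwards [h] with ω hω
  have : (fun N : ℕ => (N : ℝ)⁻¹ * ∑ i ∈ Finset.range N, f (X i ω)) =
      fun N : ℕ => (∑ i ∈ Finset.range N, f (X i ω)) / N := by
    funext N; rw [div_eq_inv_mul]
  rw [this, ← hE]
  exact hω

end Aux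

/-- Uniform strong law of large numbers for a Lipschitz-in-parameter class: if `Θ ⊂ ℝ^d`
is compact, `|m α₁ x - m α₂ x| ≤ φ x ‖α₁ - α₂‖` with `φ ∈ L¹(P)`, the `X i` are i.i.d.
with law `P` and `m α` is `P`-integrable for each `α ∈ Θ`, then almost surely
`sup_{α ∈ Θ} |N⁻¹ ∑ m α (X i) - ∫ m α dP| → 0`. -/
theorem uniform_lln {d : ℕ} (Θ : Set (EuclideanSpace ℝ (Fin d))) (hΘ : IsCompact Θ)
    {𝒳 : Type*} [MeasurableSpace 𝒳] (P : Measure 𝒳) [IsProbabilityMeasure P]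
    (m : EuclideanSpace ℝ (Fin d) → 𝒳 → ℝ)
    (hmmeas : ∀ α ∈ Θ, Measurable (m α))
    (hmint : ∀ α ∈ Θ, Integrable (m α) P)
    (φ : 𝒳 → ℝ) (hφint : Integrable φ P)
    (hLip : ∀ α₁ ∈ Θ, ∀ α₂ ∈ Θ, ∀ x : 𝒳, |m α₁ x - m α₂ x| ≤ φ x * ‖α₁ - α₂‖)
    {Ω : Type*} [MeasurableSpace Ω] (Q : Measure Ω) [IsProbabilityMeasure Q]
    (X : ℕ → Ω → 𝒳)
    (hXmeas : ∀ i, Measurable (X i))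
    (hXindep : iIndepFun X Q)
    (hXlaw : ∀ i, Measure.map (X i) Q = P) :
    ∀ᵐ ω ∂Q, ∀ η : ℝ, 0 < η → ∃ N₀ : ℕ, ∀ N ≥ N₀, ∀ α ∈ Θ,
      |(N : ℝ)⁻¹ * ∑ i ∈ Finset.range N, m α (X i ω) - ∫ x, m α x ∂P| ≤ η := by
  classical
  -- use `|φ|` as the Lipschitz envelope
  have hφabs : Integrable (fun x => |φ x|) P := hφint.abs
  have hLip' : ∀ α₁ ∈ Θ, ∀ α₂ ∈ Θ, ∀ x : 𝒳,
      |m α₁ x - m α₂ x| ≤ |φ x| * ‖α₁ - α₂‖ := fun α₁ h1 α₂ h2 x =>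
    (hLip α₁ h1 α₂ h2 x).trans
      (mul_le_mul_of_nonneg_right (le_abs_self _) (norm_nonneg _))
  -- a measurable representative of `|φ|`
  set ψ : 𝒳 → ℝ := hφabs.aestronglyMeasurable.mk _ with hψdef
  have hψmeas : Measurable ψ := hφabs.aestronglyMeasurable.stronglyMeasurable_mk.measurable
  have hψae : (fun x => |φ x|) =ᵐ[P] ψ := hφabs.aestronglyMeasurable.ae_eq_mk
  have hψint : Integrable ψ P := hφabs.congr hψae
  set C : ℝ := ∫ x, ψ x ∂P with hCdef
  have hCφ : C = ∫ x, |φ x| ∂P := (integral_congr_ae hψae).symm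
  have hC0 : 0 ≤ C := by
    rw [hCφ]; exact integral_nonneg fun x => abs_nonneg _
  -- finite δ-covers of Θ for δ = 1/(k+1)
  have cover : ∀ k : ℕ, ∃ s : Set (EuclideanSpace ℝ (Fin d)), s ⊆ Θ ∧ s.Finite ∧
      Θ ⊆ ⋃ a ∈ s, Metric.ball a (((k : ℝ) + 1)⁻¹) := by
    intro k
    obtain ⟨s, hs1, hs2, hs3⟩ := hΘ.elim_finite_subcover_image (b := Θ)
      (c := fun a => Metric.ball a (((k : ℝ) + 1)⁻¹))
      (fun a _ => Metric.isOpen_ball)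
      (fun α hα => Set.mem_biUnion hα
        (Metric.mem_ball_self (by positivity : (0:ℝ) < ((k : ℝ) + 1)⁻¹)))
    exact ⟨s, hs1, hs2, hs3⟩
  choose s hsΘ hsfin hscov using cover
  -- almost sure events
  have hae1 : ∀ᵐ ω ∂Q, ∀ k : ℕ, ∀ a ∈ s k,
      Tendsto (fun N : ℕ => (N : ℝ)⁻¹ * ∑ i ∈ Finset.range N, m a (X i ω))
        atTop (nhds (∫ x, m a x ∂P)) := by
    rw [ae_all_iff]
    intro k
    rw [ae_ball_iff (hsfin k).countable]
    intro a ha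
    exact slln_comp X hXmeas hXindep hXlaw (m a) (hmmeas a (hsΘ k ha)) (hmint a (hsΘ k ha))
  have hae2 : ∀ᵐ ω ∂Q,
      Tendsto (fun N : ℕ => (N : ℝ)⁻¹ * ∑ i ∈ Finset.range N, ψ (X i ω))
        atTop (nhds C) :=
    slln_comp X hXmeas hXindep hXlaw ψ hψmeas hψint
  have hae3 : ∀ᵐ ω ∂Q, ∀ i : ℕ, |φ (X i ω)| = ψ (X i ω) := by
    rw [ae_all_iff]
    intro i
    have : ∀ᵐ x ∂P, |φ x| = ψ x := hψae
    rw [← hXlaw i] at this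
    exact ae_of_ae_map (hXmeas i).aemeasurable this
  filter_upwards [hae1, hae2, hae3] with ω h1 h2 h3
  intro η hη
  -- choose the resolution k
  obtain ⟨k, hk⟩ := exists_nat_one_div_lt (show (0:ℝ) < η / (3 * (C + 1)) by positivity)
  set δ : ℝ := ((k : ℝ) + 1)⁻¹ with hδdef
  have hδpos : 0 < δ := by positivity
  have hδη : δ * (C + 1) < η / 3 := by
    have hδlt : δ < η / (3 * (C + 1)) := by rw [hδdef, ← one_div]; exact hk
    have hstep : δ * (C + 1) < η / (3 * (C + 1)) * (C + 1) :=
      mul_lt_mul_of_pos_right hδlt (by positivity)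
    have heq : η / (3 * (C + 1)) * (C + 1) = η / 3 := by
      field_simp
    linarith
  -- eventual bounds
  have hEv1 : ∀ᶠ N : ℕ in atTop, ∀ a ∈ s k,
      |(N : ℝ)⁻¹ * ∑ i ∈ Finset.range N, m a (X i ω) - ∫ x, m a x ∂P| ≤ η / 3 := by
    rw [(hsfin k).eventually_all]
    intro a ha
    have := (h1 k a ha).sub_const (∫ x, m a x ∂P)
    have h' := (this.abs).eventually_le_const
      (show |(∫ x, m a x ∂P) - ∫ x, m a x ∂P| < η / 3 by simp; positivity)
    filter_upwards [h'] with N hN using hN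
  have hEv2 : ∀ᶠ N : ℕ in atTop,
      (N : ℝ)⁻¹ * ∑ i ∈ Finset.range N, ψ (X i ω) ≤ C + 1 :=
    h2.eventually_le_const (by linarith)
  obtain ⟨N₀, hN₀⟩ := (hEv1.and (hEv2.and (eventually_ge_atTop 1))).exists_forall_of_atTop
  refine ⟨N₀, fun N hN α hα => ?_⟩
  obtain ⟨hNa, hNb, hN1⟩ := hN₀ N hN
  have hNpos : 0 < (N : ℝ) := by exact_mod_cast hN1
  -- find a nearby center
  obtain ⟨a, ha, hαa⟩ : ∃ a ∈ s k, α ∈ Metric.ball a δ := by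
    have := hscov k hα
    simpa using this
  have haΘ : a ∈ Θ := hsΘ k ha
  have hdist : ‖α - a‖ ≤ δ := le_of_lt (by rwa [Metric.mem_ball, dist_eq_norm] at hαa)
  -- term 1 : empirical Lipschitz bound
  have hψsum : ∀ i ∈ Finset.range N, |m α (X i ω) - m a (X i ω)| ≤ ψ (X i ω) * δ := by
    intro i _
    calc |m α (X i ω) - m a (X i ω)| ≤ |φ (X i ω)| * ‖α - a‖ := hLip' α hα a haΘ _
      _ ≤ |φ (X i ω)| * δ := mul_le_mul_of_nonneg_left hdist (abs_nonneg _)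
      _ = ψ (X i ω) * δ := by rw [h3 i]
  have hterm1 : |(N : ℝ)⁻¹ * ∑ i ∈ Finset.range N, m α (X i ω)
      - (N : ℝ)⁻¹ * ∑ i ∈ Finset.range N, m a (X i ω)| ≤ η / 3 := by
    have hb : |∑ i ∈ Finset.range N, (m α (X i ω) - m a (X i ω))|
        ≤ ∑ i ∈ Finset.range N, ψ (X i ω) * δ :=
      (Finset.abs_sum_le_sum_abs _ _).trans (Finset.sum_le_sum hψsum)
    calc |(N : ℝ)⁻¹ * ∑ i ∈ Finset.range N, m α (X i ω)
        - (N : ℝ)⁻¹ * ∑ i ∈ Finset.range N, m a (X i ω)|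
        = (N : ℝ)⁻¹ * |∑ i ∈ Finset.range N, (m α (X i ω) - m a (X i ω))| := by
          rw [← mul_sub, abs_mul, Finset.sum_sub_distrib]
          simp [abs_of_nonneg (le_of_lt (inv_pos.mpr hNpos))]
      _ ≤ (N : ℝ)⁻¹ * ∑ i ∈ Finset.range N, ψ (X i ω) * δ :=
          mul_le_mul_of_nonneg_left hb (le_of_lt (inv_pos.mpr hNpos))
      _ = ((N : ℝ)⁻¹ * ∑ i ∈ Finset.range N, ψ (X i ω)) * δ := by
          rw [← Finset.sum_mul]; ring
      _ ≤ (C + 1) * δ := mul_le_mul_of_nonneg_right hNb (le_of_lt hδpos)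
      _ = δ * (C + 1) := mul_comm _ _
      _ ≤ η / 3 := le_of_lt hδη
  -- term 3 : integral Lipschitz bound
  have hterm3 : |(∫ x, m a x ∂P) - ∫ x, m α x ∂P| ≤ η / 3 := by
    have hint : Integrable (fun x => m a x - m α x) P := (hmint a haΘ).sub (hmint α hα)
    have h1' : |(∫ x, m a x ∂P) - ∫ x, m α x ∂P| = |∫ x, (m a x - m α x) ∂P| := by
      rw [integral_sub (hmint a haΘ) (hmint α hα)]
    have h2' : |∫ x, (m a x - m α x) ∂P| ≤ ∫ x, |m a x - m α x| ∂P := by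
      simpa [Real.norm_eq_abs] using
        norm_integral_le_integral_norm (μ := P) (fun x => m a x - m α x)
    have h3' : ∫ x, |m a x - m α x| ∂P ≤ ∫ x, ψ x * δ ∂P := by
      apply integral_mono_ae hint.abs (hψint.mul_const δ)
      filter_upwards [hψae] with x hx
      calc |m a x - m α x| ≤ |φ x| * ‖a - α‖ := hLip' a haΘ α hα x
        _ ≤ |φ x| * δ := by
            apply mul_le_mul_of_nonneg_left _ (abs_nonneg _)
            rwa [← norm_neg, neg_sub]
        _ = ψ x * δ := by rw [hx]
    have h4' : ∫ x, ψ x * δ ∂P = C * δ := by rw [integral_mul_const]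
    calc |(∫ x, m a x ∂P) - ∫ x, m α x ∂P| ≤ ∫ x, ψ x * δ ∂P := by
          rw [h1']; exact h2'.trans h3'
      _ = C * δ := h4'
      _ ≤ (C + 1) * δ := mul_le_mul_of_nonneg_right (by linarith) (le_of_lt hδpos)
      _ = δ * (C + 1) := mul_comm _ _
      _ ≤ η / 3 := le_of_lt hδη
  -- combine
  have := hNa a ha
  calc |(N : ℝ)⁻¹ * ∑ i ∈ Finset.range N, m α (X i ω) - ∫ x, m α x ∂P|
      ≤ |(N : ℝ)⁻¹ * ∑ i ∈ Finset.range N, m α (X i ω)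
          - (N : ℝ)⁻¹ * ∑ i ∈ Finset.range N, m a (X i ω)|
        + |(N : ℝ)⁻¹ * ∑ i ∈ Finset.range N, m a (X i ω) - ∫ x, m a x ∂P|
        + |(∫ x, m a x ∂P) - ∫ x, m α x ∂P| := by
        have := abs_sub_le ((N : ℝ)⁻¹ * ∑ i ∈ Finset.range N, m α (X i ω))
          ((N : ℝ)⁻¹ * ∑ i ∈ Finset.range N, m a (X i ω)) (∫ x, m α x ∂P)
        have h2'' := abs_sub_le ((N : ℝ)⁻¹ * ∑ i ∈ Finset.range N, m a (X i ω))
          (∫ x, m a x ∂P) (∫ x, m α x ∂P)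
        linarith
    _ ≤ η / 3 + η / 3 + η / 3 := by
        exact add_le_add (add_le_add hterm1 this) hterm3
    _ = η := by ring
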